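/- Let Λ = Λ₀ ⊕ Zu ⊕ Zv where Λ₀ is even unimodular containing a hyperbolic plane and u² = v² = −2, (u,v) = 0 (the OG₆ lattice). Let n ≥ 1. There exists a primitive h ∈ Λ with h² = 2n and div(h) = 2 if and only if n ≡ 2 or 3 (mod 4). -/

import Mathlib

/-- Proposition 3.6 (OG₆ case): in `Λ = Λ₀ ⊕ ℤu ⊕ ℤv` with `Λ₀` even unimodular
containing a hyperbolic plane, `u² = v² = −2`, `(u,v) = 0`, there exists a primitive
`h` with `h² = 2n` and `div(h) = 2` iff `n ≡ 2` or `3 (mod 4)`.  `Λ` is modelled as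
`Λ₀ × ℤ × ℤ` and divisibility via the ideal of pairing values. -/
theorem stmt_14 (Λ₀ : Type) [AddCommGroup Λ₀] [Module ℤ Λ₀]
    [Module.Free ℤ Λ₀] [Module.Finite ℤ Λ₀]
    (B : Λ₀ →ₗ[ℤ] Λ₀ →ₗ[ℤ] ℤ)
    (hsymm : ∀ x y, B x y = B y x)
    (heven : ∀ x, 2 ∣ B x x)
    (hunimod : Function.Bijective fun x => B x)
    (e f : Λ₀) (he : B e e = 0) (hf : B f f = 0) (hef : B e f = 1)
    (Bl : Λ₀ × ℤ × ℤ → Λ₀ × ℤ × ℤ → ℤ)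
    (hBl : ∀ w z, Bl w z = B w.1 z.1 - 2 * (w.2.1 * z.2.1) - 2 * (w.2.2 * z.2.2))
    (n : ℕ) (hn : 1 ≤ n) :
    (∃ h : Λ₀ × ℤ × ℤ,
        (∀ (c : ℤ) (w : Λ₀ × ℤ × ℤ), h = c • w → IsUnit c) ∧
        Bl h h = 2 * n ∧
        (∀ t : ℤ, ((2 : ℤ) ∣ t ↔ ∃ w, Bl h w = t))) ↔
      (n % 4 = 2 ∨ n % 4 = 3) := by
  constructor
  · rintro ⟨⟨x, b, c⟩, hprim, hsq, hdiv⟩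
    have hxeven : ∀ z : Λ₀, 2 ∣ B x z := by
      intro z
      have h2 : (2:ℤ) ∣ Bl (x, b, c) (z, 0, 0) := (hdiv _).mpr ⟨(z, 0, 0), rfl⟩
      rw [hBl] at h2
      simpa using h2
    let φ : Λ₀ →ₗ[ℤ] ℤ :=
      { toFun := fun z => B x z / 2
        map_add' := by
          intro a b'
          obtain ⟨s, hs⟩ := hxeven a
          obtain ⟨t, ht⟩ := hxeven b'
          simp only [map_add, hs, ht]
          omega
        map_smul' := by
          intro m a
          obtain ⟨s, hs⟩ := hxeven a
          simp only [map_smul, smul_eq_mul, hs, RingHom.id_apply]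
          have h1 : m * (2 * s) = 2 * (m * s) := by ring
          rw [h1, Int.mul_ediv_cancel_left _ two_ne_zero,
            Int.mul_ediv_cancel_left _ two_ne_zero] }
    obtain ⟨y, hy⟩ := hunimod.2 φ
    have hy' : B y = φ := hy
    have hx2 : x = (2:ℤ) • y := by
      apply hunimod.1
      show B x = B ((2:ℤ) • y)
      ext z
      obtain ⟨s, hs⟩ := hxeven z
      have hφ : φ z = s := by simp [φ, hs]
      have hsm : B ((2:ℤ) • y) z = 2 * B y z := by simp
      rw [hsm, hy', hφ, hs]
    obtain ⟨d, hdd⟩ := heven y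
    have hBxx : B x x = 8 * d := by
      rw [hx2]
      simp [hdd]
      ring
    have hsq' : (2:ℤ) * n = B x x - 2 * (b * b) - 2 * (c * c) := by
      rw [← hsq, hBl]
    have hn' : (n : ℤ) = 4 * d - b * b - c * c := by linarith
    have hbc : ¬ ((2:ℤ) ∣ b ∧ (2:ℤ) ∣ c) := by
      rintro ⟨⟨p, rfl⟩, ⟨q, rfl⟩⟩
      have h2 : (x, 2 * p, 2 * q) = (2:ℤ) • ((y, p, q) : Λ₀ × ℤ × ℤ) := by
        refine Prod.ext ?_ (Prod.ext ?_ ?_)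
        · simpa using hx2
        · simp
        · simp
      have := hprim 2 (y, p, q) h2
      rw [Int.isUnit_iff] at this
      omega
    rcases Int.even_or_odd b with ⟨p, hp⟩ | ⟨p, hp⟩ <;>
      rcases Int.even_or_odd c with ⟨q, hq⟩ | ⟨q, hq⟩
    · exact absurd ⟨⟨p, by omega⟩, ⟨q, by omega⟩⟩ hbc
    · obtain ⟨M, hM⟩ : ∃ M : ℤ, (n : ℤ) = 4 * M - 1 :=
        ⟨d - p * p - q * q - q, by rw [hn', hp, hq]; ring⟩
      omega
    · obtain ⟨M, hM⟩ : ∃ M : ℤ, (n : ℤ) = 4 * M - 1 :=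
        ⟨d - p * p - p - q * q, by rw [hn', hp, hq]; ring⟩
      omega
    · obtain ⟨M, hM⟩ : ∃ M : ℤ, (n : ℤ) = 4 * M - 2 :=
        ⟨d - p * p - p - q * q - q, by rw [hn', hp, hq]; ring⟩
      omega
  · intro hmod
    obtain ⟨k, c₀, hkey⟩ : ∃ k c₀ : ℤ, 8 * k - 2 - 2 * (c₀ * c₀) = 2 * (n : ℤ) := by
      rcases hmod with h | h
      · exact ⟨((n / 4 : ℕ) : ℤ) + 1, 1, by push_cast; omega⟩
      · exact ⟨((n / 4 : ℕ) : ℤ) + 1, 0, by push_cast; omega⟩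
    refine ⟨((2:ℤ) • (e + k • f), 1, c₀), ?_, ?_, ?_⟩
    · intro c w hcw
      have h1 := congrArg (fun z : Λ₀ × ℤ × ℤ => z.2.1) hcw
      simp only [Prod.smul_snd, Prod.smul_fst, smul_eq_mul] at h1
      exact IsUnit.of_mul_eq_one (a := c) w.2.1 h1.symm
    · rw [hBl]
      have hx : B ((2:ℤ) • (e + k • f)) ((2:ℤ) • (e + k • f)) = 8 * k := by
        simp [map_add, he, hf, hef, hsymm f e]
        ring
      rw [hx]
      show (8:ℤ) * k - 2 * (1 * 1) - 2 * (c₀ * c₀) = 2 * (n : ℤ)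
      linarith
    · intro t
      constructor
      · rintro ⟨s, rfl⟩
        refine ⟨(0, -s, 0), ?_⟩
        rw [hBl]
        simp
      · rintro ⟨w, rfl⟩
        rw [hBl]
        have h2 : B ((2:ℤ) • (e + k • f)) w.1 = 2 * B (e + k • f) w.1 := by
          simp
          ring
        rw [h2]
        exact ⟨B (e + k • f) w.1 - 1 * w.2.1 - c₀ * w.2.2, by ring⟩
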